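/- For every real M > −1/(3√3), the function H(t) = W_M(t)^{−1/2} is differentiable on (t₊(M), ∞) and satisfies there the identity (2/t)·(H'(t)/H(t)) = (H(t)² + 1)/t² − 3·H(t)². (This is the ODE reduction of the Einstein equations Ric(g) = 3g for the SO(3)×U(1)-symmetric Lorentzian metrics −H² dt² + t² dσ₂² + a² W dσ₁².) -/

import Mathlib

/-- For every real `M > −1/(3√3)`, the function `H(t) = W_M(t)^{−1/2}`,
where `W_M(t) = t² − 1 − 2M/t`, is differentiable on `(t₊(M), ∞)` and satisfies there
`(2/t)·(H'(t)/H(t)) = (H(t)² + 1)/t² − 3·H(t)²`. -/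
theorem wick_rotated_einstein_ode (M : ℝ) (hM : -1 / (3 * Real.sqrt 3) < M)
    (tp : ℝ) (htp : IsGreatest {s : ℝ | s ^ 3 - s - 2 * M = 0} tp) :
    ∀ t : ℝ, tp < t →
      DifferentiableAt ℝ (fun s : ℝ => 1 / Real.sqrt (s ^ 2 - 1 - 2 * M / s)) t ∧
      (2 / t) * (deriv (fun s : ℝ => 1 / Real.sqrt (s ^ 2 - 1 - 2 * M / s)) t /
          (1 / Real.sqrt (t ^ 2 - 1 - 2 * M / t))) =
        ((1 / Real.sqrt (t ^ 2 - 1 - 2 * M / t)) ^ 2 + 1) / t ^ 2 -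
          3 * (1 / Real.sqrt (t ^ 2 - 1 - 2 * M / t)) ^ 2 := by
  obtain ⟨htp_mem, htp_ub⟩ := htp
  have htpe : tp ^ 3 - tp - 2 * M = 0 := htp_mem
  have h3 : (0:ℝ) < Real.sqrt 3 := Real.sqrt_pos.mpr (by norm_num)
  have h3sq : Real.sqrt 3 ^ 2 = 3 := Real.sq_sqrt (by norm_num)
  have hcube : Real.sqrt 3 ^ 3 = 3 * Real.sqrt 3 := by
    rw [pow_succ, h3sq]
  -- f(1/√3) < 0
  have hfneg : (1 / Real.sqrt 3) ^ 3 - (1 / Real.sqrt 3) - 2 * M < 0 := by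
    have e : (1 / Real.sqrt 3) ^ 3 - (1 / Real.sqrt 3) = 2 * (-1 / (3 * Real.sqrt 3)) := by
      rw [div_pow, one_pow, hcube]
      field_simp
      ring
    rw [e]
    linarith
  -- f is positive at S = |2*M| + 2
  set S : ℝ := |2 * M| + 2 with hS
  have hSpos : (0:ℝ) < S := by positivity
  have hfS : 0 < S ^ 3 - S - 2 * M := by
    rw [hS]
    nlinarith [le_abs_self (2 * M), abs_nonneg (2 * M),
      pow_nonneg (abs_nonneg (2 * M)) 3, sq_nonneg (2 * M), sq_nonneg (|2 * M|)]
  -- 1/√3 < S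
  have h13S : 1 / Real.sqrt 3 < S := by
    rw [div_lt_iff₀ h3, hS]
    nlinarith [le_abs_self (2 * M), abs_nonneg (2 * M)]
  -- root above 1/√3 by IVT
  have hroot : ∃ c ∈ Set.Icc (1 / Real.sqrt 3) S, c ^ 3 - c - 2 * M = 0 := by
    have hcont : ContinuousOn (fun s : ℝ => s ^ 3 - s - 2 * M) (Set.Icc (1 / Real.sqrt 3) S) := by
      fun_prop
    have := intermediate_value_Icc (le_of_lt h13S) hcont
    have h0mem : (0:ℝ) ∈ Set.Icc ((1 / Real.sqrt 3) ^ 3 - (1 / Real.sqrt 3) - 2 * M)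
        (S ^ 3 - S - 2 * M) := ⟨le_of_lt hfneg, le_of_lt hfS⟩
    obtain ⟨c, hc, hc0⟩ := this h0mem
    exact ⟨c, hc, hc0⟩
  obtain ⟨c, hcI, hc0⟩ := hroot
  have htp13 : 1 / Real.sqrt 3 < tp := by
    have hctp : c ≤ tp := htp_ub hc0
    rcases lt_or_eq_of_le hcI.1 with h | h
    · linarith
    · exfalso; rw [← h] at hc0; linarith
  have htpsq : 1 / 3 < tp ^ 2 := by
    have h1 : 1 < tp * Real.sqrt 3 := by
      rw [div_lt_iff₀ h3] at htp13; linarith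
    have htp0 : 0 < tp := lt_trans (by positivity) htp13
    nlinarith
  have htp0 : 0 < tp := lt_trans (by positivity) htp13
  intro t ht
  have ht0 : 0 < t := lt_trans htp0 ht
  -- f(t) > 0
  have hft : 0 < t ^ 3 - t - 2 * M := by
    have h1 : 0 < t ^ 2 + t * tp + tp ^ 2 - 1 := by nlinarith
    nlinarith [mul_pos (sub_pos.mpr ht) h1]
  have e : t ^ 2 - 1 - 2 * M / t = (t ^ 3 - t - 2 * M) / t := by
    field_simp
  have hw : 0 < t ^ 2 - 1 - 2 * M / t := by
    rw [e]; exact div_pos hft ht0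
  set w : ℝ := t ^ 2 - 1 - 2 * M / t with hwdef
  have hsw : 0 < Real.sqrt w := Real.sqrt_pos.mpr hw
  have hswsq : Real.sqrt w ^ 2 = w := Real.sq_sqrt hw.le
  -- derivative of inner function
  have hinner : HasDerivAt (fun s : ℝ => s ^ 2 - 1 - 2 * M / s)
      (2 * t - (2 * M) * (-1 / t ^ 2)) t := by
    have h1 : HasDerivAt (fun s : ℝ => s ^ 2) (2 * t) t := by
      simpa using hasDerivAt_pow 2 t
    have h2 : HasDerivAt (fun s : ℝ => 2 * M / s) ((2 * M) * (-1 / t ^ 2)) t := by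
      have := (hasDerivAt_id t).inv ht0.ne'
      have := this.const_mul (2 * M)
      simpa [div_eq_mul_inv, neg_div] using this
    simpa using (h1.sub_const 1).fun_sub h2
  have hsqrt : HasDerivAt (fun s : ℝ => Real.sqrt (s ^ 2 - 1 - 2 * M / s))
      ((2 * t - (2 * M) * (-1 / t ^ 2)) / (2 * Real.sqrt w)) t :=
    hinner.sqrt hw.ne'
  have hH : HasDerivAt (fun s : ℝ => 1 / Real.sqrt (s ^ 2 - 1 - 2 * M / s))
      (-((2 * t - (2 * M) * (-1 / t ^ 2)) / (2 * Real.sqrt w)) / Real.sqrt w ^ 2) t := by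
    have := hsqrt.fun_inv hsw.ne'
    simpa [one_div, ← hwdef] using this
  refine ⟨hH.differentiableAt, ?_⟩
  rw [hH.deriv]
  have h1s : (1 / Real.sqrt w) ^ 2 = 1 / w := by
    rw [div_pow, one_pow, hswsq]
  have hkey : -((2 * t - (2 * M) * (-1 / t ^ 2)) / (2 * Real.sqrt w)) / Real.sqrt w ^ 2
      / (1 / Real.sqrt w) = -(2 * t - (2 * M) * (-1 / t ^ 2)) / (2 * w) := by
    rw [hswsq]
    field_simp
  rw [h1s, hkey, e]
  rw [div_div_eq_mul_div]
  have hD : t ^ 3 - t - 2 * M ≠ 0 := hft.ne'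
  field_simp
  have hX : (-t + t ^ 3 - M * 2) * (-t + t ^ 3 - M * 2)⁻¹ = 1 :=
    mul_inv_cancel₀ (by intro h; apply hD; linarith)
  linear_combination hX
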